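/- Let ℓ ≥ 1 be a real number and dist a metric on a set X of clusterings. Let D₁, …, D_m ∈ X, F* ∈ X, and suppose there is an index i* minimizing dist(D_i, F*) over i, and F ∈ X with dist(D_{i*}, F) ≤ α · dist(D_{i*}, F*) for some α ≥ 1. Then (∑_{j=1}^m dist(D_j, F)^ℓ)^{1/ℓ} ≤ (2 + α) · (∑_{j=1}^m dist(D_j, F*)^ℓ)^{1/ℓ}. -/
import Mathlib


/-- `(2+α)`-approximation for the `ℓ`-mean fair consensus objective. -/
theorem stmt_7 (X : Type*) (dist : X → X → ℝ)
    (hnonneg : ∀ a b, 0 ≤ dist a b) (hsymm : ∀ a b, dist a b = dist b a)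
    (htri : ∀ a b c, dist a c ≤ dist a b + dist b c)
    (ℓ : ℝ) (hℓ : 1 ≤ ℓ)
    (m : ℕ) (D : Fin m → X) (Fstar F : X) (α : ℝ) (hα : 1 ≤ α)
    (istar : Fin m) (hmin : ∀ j, dist (D istar) Fstar ≤ dist (D j) Fstar)
    (hclose : dist (D istar) F ≤ α * dist (D istar) Fstar) :
    (∑ j, dist (D j) F ^ ℓ) ^ (1 / ℓ) ≤
      (2 + α) * (∑ j, dist (D j) Fstar ^ ℓ) ^ (1 / ℓ) := by
  have hℓ0 : (0:ℝ) < ℓ := lt_of_lt_of_le one_pos hℓ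
  have hca : (0:ℝ) ≤ 2 + α := by linarith
  have key : ∀ j, dist (D j) F ≤ (2 + α) * dist (D j) Fstar := by
    intro j
    have h1 : dist (D j) F ≤ dist (D j) Fstar + dist Fstar (D istar) + dist (D istar) F := by
      calc dist (D j) F ≤ dist (D j) Fstar + dist Fstar F := htri _ _ _
        _ ≤ dist (D j) Fstar + (dist Fstar (D istar) + dist (D istar) F) := by
            have := htri Fstar (D istar) F; linarith
        _ = _ := by ring
    have h2 : dist Fstar (D istar) = dist (D istar) Fstar := hsymm _ _
    have h3 := hmin j
    have h4 := hclose
    nlinarith [hnonneg (D j) Fstar, hnonneg (D istar) Fstar]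
  have hsum : (∑ j, dist (D j) F ^ ℓ) ≤ (2 + α) ^ ℓ * ∑ j, dist (D j) Fstar ^ ℓ := by
    rw [Finset.mul_sum]
    apply Finset.sum_le_sum
    intro j _
    rw [← Real.mul_rpow hca (hnonneg _ _)]
    exact Real.rpow_le_rpow (hnonneg _ _) (key j) hℓ0.le
  have hsumnn : 0 ≤ ∑ j, dist (D j) Fstar ^ ℓ :=
    Finset.sum_nonneg fun j _ => Real.rpow_nonneg (hnonneg _ _) _
  calc (∑ j, dist (D j) F ^ ℓ) ^ (1 / ℓ)
      ≤ ((2 + α) ^ ℓ * ∑ j, dist (D j) Fstar ^ ℓ) ^ (1 / ℓ) := by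
        apply Real.rpow_le_rpow (Finset.sum_nonneg fun j _ => Real.rpow_nonneg (hnonneg _ _) _)
          hsum (by positivity)
    _ = (2 + α) * (∑ j, dist (D j) Fstar ^ ℓ) ^ (1 / ℓ) := by
        rw [Real.mul_rpow (Real.rpow_nonneg hca _) hsumnn, ← Real.rpow_mul hca,
          mul_one_div_cancel hℓ0.ne', Real.rpow_one]
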